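/- Let n ≥ p ≥ r > 0 be integers. Every affine subspace of the space of n×p real matrices in which every element has rank exactly r has dimension at most r(r−1)/2 + r(n−r), and there exists an affine subspace of n×p real matrices of dimension exactly r(r−1)/2 + r(n−r) in which every element has rank exactly r. -/

import Mathlib

open Matrix Module Polynomial

namespace StmtAux
section SEC1
variable {R : Type*} [Field R]

/-- submatrix with arbitrary index maps has smaller rank -/
lemma rank_submatrix_le' {m n m' n' : Type*} [Fintype m] [Fintype n] [Fintype m'] [Fintype n']
    [DecidableEq m] [DecidableEq n]
    (A : Matrix m n R) (f : m' → m) (g : n' → n) :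
    (A.submatrix f g).rank ≤ A.rank := by
  have h : A.submatrix f g =
      ((1 : Matrix m m R).submatrix f id) * A * ((1 : Matrix n n R).submatrix id g) := by
    ext i j
    simp [Matrix.mul_apply, Matrix.one_apply, Finset.sum_ite_eq, Finset.sum_ite_eq']
  rw [h]
  exact le_trans (Matrix.rank_mul_le_left _ _)
    (Matrix.rank_mul_le_right _ _)

lemma rank_reindex' {m n m' n' : Type*} [Fintype m] [Fintype n] [Fintype m'] [Fintype n']
    [DecidableEq m] [DecidableEq n] [DecidableEq m'] [DecidableEq n']
    (e₁ : m ≃ m') (e₂ : n ≃ n') (A : Matrix m n R) :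
    (Matrix.reindex e₁ e₂ A).rank = A.rank := by
  refine le_antisymm (rank_submatrix_le' A _ _) ?_
  have : A = (Matrix.reindex e₁ e₂ A).submatrix e₁ e₂ := by
    ext i j; simp
  conv_lhs => rw [this]
  exact rank_submatrix_le' _ _ _

lemma isUnit_of_rank_eq_card {n : Type*} [Fintype n] [DecidableEq n]
    {A : Matrix n n R} (h : A.rank = Fintype.card n) : IsUnit A := by
  rw [Matrix.isUnit_iff_isUnit_det, isUnit_iff_ne_zero]
  intro hdet
  obtain ⟨v, hv, hAv⟩ := Matrix.exists_mulVec_eq_zero_iff.2 hdet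
  have hker : v ∈ LinearMap.ker A.mulVecLin := by simpa [Matrix.mulVecLin] using hAv
  have h1 : 0 < finrank R (LinearMap.ker A.mulVecLin) := by
    apply Module.finrank_pos_iff_exists_ne_zero.2
    exact ⟨⟨v, hker⟩, by simpa [Submodule.mk_eq_zero] using hv⟩
  have h2 := LinearMap.finrank_range_add_finrank_ker A.mulVecLin
  rw [Module.finrank_pi] at h2
  have : A.rank + finrank R (LinearMap.ker A.mulVecLin) = Fintype.card n := h2
  omega

variable {α β γ δ : Type*} [Fintype α] [Fintype β] [Fintype γ] [Fintype δ]
  [DecidableEq α] [DecidableEq β] [DecidableEq γ] [DecidableEq δ]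

lemma rank_fromBlocks_left (X : Matrix α γ R) (C : Matrix β γ R) :
    (Matrix.fromBlocks X 0 C 0 : Matrix (α ⊕ β) (γ ⊕ δ) R).rank = (Matrix.fromRows X C).rank := by
  refine le_antisymm ?_ ?_
  · have h : (Matrix.fromBlocks X 0 C 0 : Matrix (α ⊕ β) (γ ⊕ δ) R)
        = (Matrix.fromRows X C) * (Matrix.fromCols (1 : Matrix γ γ R) (0 : Matrix γ δ R)) := by
      rw [Matrix.fromRows_mul_fromCols]
      simp
    rw [h]; exact Matrix.rank_mul_le_left _ _
  · have h : Matrix.fromRows X C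
        = (Matrix.fromBlocks X 0 C 0 : Matrix (α ⊕ β) (γ ⊕ δ) R).submatrix id Sum.inl := by
      ext i j; cases i <;> simp
    rw [h]; exact rank_submatrix_le' _ _ _

lemma rank_fromRows_isUnit {X : Matrix α α R} (C : Matrix β α R) (h : IsUnit X) :
    (Matrix.fromRows X C).rank = Fintype.card α := by
  refine le_antisymm (Matrix.rank_le_card_width _) ?_
  have h2 : X = (Matrix.fromRows X C).submatrix Sum.inl id := by ext; simp
  calc Fintype.card α = X.rank := (Matrix.rank_of_isUnit X h).symm
  _ ≤ _ := by rw [h2]; exact rank_submatrix_le' _ _ _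

lemma rank_fromBlocks_isUnit {X : Matrix α α R} (C : Matrix β α R) (h : IsUnit X) :
    (Matrix.fromBlocks X 0 C 0 : Matrix (α ⊕ β) (α ⊕ δ) R).rank = Fintype.card α := by
  rw [rank_fromBlocks_left, rank_fromRows_isUnit _ h]

lemma rank_fromBlocks_corner (X : Matrix α γ R) :
    (Matrix.fromBlocks X 0 0 0 : Matrix (α ⊕ β) (γ ⊕ δ) R).rank = X.rank := by
  rw [rank_fromBlocks_left]
  refine le_antisymm ?_ ?_
  · have h : (Matrix.fromRows X (0 : Matrix β γ R)) = (Matrix.fromRows (1 : Matrix α α R) 0) * X := by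
      rw [Matrix.fromRows_mul]; simp
    rw [h]; exact Matrix.rank_mul_le_right _ _
  · have h2 : X = (Matrix.fromRows X (0 : Matrix β γ R)).submatrix Sum.inl id := by ext; simp
    conv_lhs => rw [h2]
    exact rank_submatrix_le' _ _ _

/-- a real symmetric matrix `s` with `1 + t • s` invertible for all `t` is zero -/
lemma symm_eq_zero_of_unit {r : ℕ} {s : Matrix (Fin r) (Fin r) ℝ} (hs : s.IsHermitian)
    (h : ∀ t : ℝ, IsUnit (1 + t • s)) : s = 0 := by
  by_contra hne
  obtain ⟨v, t, ht, hv, hsv⟩ := hs.exists_eigenvector_of_ne_zero hne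
  have hu := h (-t⁻¹)
  have hmv : (1 + (-t⁻¹) • s) *ᵥ v = 0 := by
    rw [Matrix.add_mulVec, Matrix.one_mulVec, Matrix.smul_mulVec, hsv]
    rw [smul_smul]
    field_simp
    simp
  have : v = 0 := by
    have hd : IsUnit (1 + (-t⁻¹) • s).det := (Matrix.isUnit_iff_isUnit_det _).1 hu
    have h3 := congrArg (fun w => (1 + (-t⁻¹) • s)⁻¹ *ᵥ w) hmv
    simp only [Matrix.mulVec_mulVec, Matrix.mulVec_zero] at h3
    rw [Matrix.nonsing_inv_mul _ hd, Matrix.one_mulVec] at h3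
    exact h3
  exact hv this



end SEC1
section SEC2
lemma sum_fin_id (r : ℕ) : ∑ x : Fin r, (x : ℕ) = r * (r - 1) / 2 := by
  rw [show (∑ x : Fin r, (x : ℕ)) = ∑ i ∈ Finset.range r, i from
    (Finset.sum_range (fun i => i)).symm ▸ Fin.sum_univ_eq_sum_range (fun i => i) r]
  exact Finset.sum_range_id r

lemma card_lt_pairs (r : ℕ) :
    Fintype.card {q : Fin r × Fin r // q.1 < q.2} = r * (r - 1) / 2 := by
  have e : {q : Fin r × Fin r // q.1 < q.2} ≃ Σ j : Fin r, Fin j.1 :=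
    { toFun := fun q => ⟨q.1.2, ⟨q.1.1.1, q.2⟩⟩
      invFun := fun s => ⟨(⟨s.2.1, lt_trans s.2.2 s.1.2⟩, s.1), s.2.2⟩
      left_inv := fun q => by ext <;> rfl
      right_inv := fun s => by ext <;> rfl }
  rw [Fintype.card_congr e, Fintype.card_sigma]
  simp only [Fintype.card_fin]
  exact sum_fin_id r

lemma card_le_pairs (r : ℕ) :
    Fintype.card {q : Fin r × Fin r // q.1 ≤ q.2} = r * (r - 1) / 2 + r := by
  have e : {q : Fin r × Fin r // q.1 ≤ q.2} ≃ Σ j : Fin r, Fin (j.1 + 1) :=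
    { toFun := fun q => ⟨q.1.2, ⟨q.1.1.1, Nat.lt_succ_of_le q.2⟩⟩
      invFun := fun s => ⟨(⟨s.2.1, lt_of_le_of_lt (Nat.lt_succ_iff.1 s.2.2) s.1.2⟩, s.1),
        Fin.mk_le_of_le_val (Nat.lt_succ_iff.1 s.2.2)⟩
      left_inv := fun q => by ext <;> rfl
      right_inv := fun s => by ext <;> rfl }
  rw [Fintype.card_congr e, Fintype.card_sigma]
  simp only [Fintype.card_fin]
  rw [show (∑ j : Fin r, (j.1 + 1)) = (∑ j : Fin r, (j : ℕ)) + r by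
    rw [Finset.sum_add_distrib]; simp]
  rw [sum_fin_id]

lemma two_dvd_pred_mul (r : ℕ) : 2 ∣ r * (r - 1) := by
  rcases Nat.even_or_odd r with h | h
  · exact Dvd.dvd.mul_right h.two_dvd _
  · rcases Nat.eq_zero_or_pos r with h0 | h0
    · simp [h0]
    · have : Even (r - 1) := Nat.Odd.sub_odd h odd_one
      exact Dvd.dvd.mul_left this.two_dvd _

lemma nat_square_split {r : ℕ} (hr : 0 < r) : r * (r - 1) / 2 + r * (r - 1) / 2 + r = r * r := by
  have h2 := two_dvd_pred_mul r
  have h3 : r * (r - 1) / 2 + r * (r - 1) / 2 = r * (r - 1) := by omega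
  rw [h3]
  have : r - 1 + 1 = r := Nat.succ_pred_eq_of_pos hr
  calc r * (r - 1) + r = r * ((r - 1) + 1) := by ring
  _ = r * r := by rw [this]



end SEC2
noncomputable section SEC3

variable {r : ℕ}

private def aX (a : Matrix (Fin r) (Fin r) ℝ) : Matrix (Fin r) (Fin r) ℝ[X] :=
  1 + (X : ℝ[X]) • a.map Polynomial.C

private lemma map_aX (a : Matrix (Fin r) (Fin r) ℝ) (t : ℝ) :
    (aX a).map (eval t) = 1 + t • a := by
  ext i j
  simp only [aX, Matrix.map_apply, Matrix.add_apply, Matrix.smul_apply, smul_eq_mul,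
    Matrix.one_apply]
  split_ifs <;> simp <;> ring

private lemma map_fromBlocks {α β : Type*} {m₁ m₂ n₁ n₂ : Type*}
    (f : α → β) (A : Matrix m₁ n₁ α) (B : Matrix m₁ n₂ α) (C : Matrix m₂ n₁ α)
    (D : Matrix m₂ n₂ α) :
    (Matrix.fromBlocks A B C D).map f =
      Matrix.fromBlocks (A.map f) (B.map f) (C.map f) (D.map f) := by
  ext i j
  rcases i with i | i <;> rcases j with j | j <;> simp

private lemma map_smulX {m n : Type*} (M : Matrix m n ℝ) (t : ℝ) :
    (((X : ℝ[X]) • M.map Polynomial.C).map (eval t)) = t • M := by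
  ext i j
  simp only [Matrix.map_apply, Matrix.smul_apply, smul_eq_mul]
  simp; ring

private lemma map_CM {m n : Type*} (M : Matrix m n ℝ) (t : ℝ) :
    ((M.map Polynomial.C).map (eval t)) = M := by
  ext i j; simp [Matrix.map_apply]

/-- Key minor lemma: if all bordered determinants vanish then `δ = 0` and `v * u = 0`. -/
lemma minor_poly (a : Matrix (Fin r) (Fin r) ℝ) (u : Matrix (Fin r) Unit ℝ)
    (v : Matrix Unit (Fin r) ℝ) (δ : Matrix Unit Unit ℝ)
    (h : ∀ t : ℝ, (Matrix.fromBlocks (1 + t • a) (t • u) (t • v) (t • δ)).det = 0) :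
    δ = 0 ∧ v * u = 0 := by
  classical
  set δ₀ : ℝ := δ () () with hδ₀
  set F : ℝ[X] :=
    (Matrix.fromBlocks (aX a) ((X : ℝ[X]) • u.map C) ((X : ℝ[X]) • v.map C)
      ((X : ℝ[X]) • δ.map C)).det with hF
  set F₀ : ℝ[X] := (aX a).det with hF₀
  set F₁ : ℝ[X] := (Matrix.fromBlocks (aX a) (u.map C) (v.map C) 0).det with hF₁
  have hevF : ∀ t : ℝ, eval t F =
      (Matrix.fromBlocks (1 + t • a) (t • u) (t • v) (t • δ)).det := by
    intro t
    rw [hF, show (eval t) ((fromBlocks (aX a) ((X:ℝ[X]) • u.map C) ((X:ℝ[X]) • v.map C)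
        ((X:ℝ[X]) • δ.map C)).det) = (evalRingHom t) _ from rfl, RingHom.map_det]
    congr 1
    rw [RingHom.mapMatrix_apply]
    show (fromBlocks _ _ _ _).map (eval t) = _
    rw [map_fromBlocks, map_aX, map_smulX, map_smulX, map_smulX]
  have hevF₀ : ∀ t : ℝ, eval t F₀ = (1 + t • a).det := by
    intro t
    rw [hF₀, show (eval t) (aX a).det = (evalRingHom t) _ from rfl, RingHom.map_det]
    congr 1
    rw [RingHom.mapMatrix_apply]
    exact map_aX a t
  have hevF₁ : ∀ t : ℝ, eval t F₁ =
      (Matrix.fromBlocks (1 + t • a) u v 0).det := by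
    intro t
    rw [hF₁, show (eval t) (fromBlocks (aX a) (u.map C) (v.map C) 0).det
      = (evalRingHom t) _ from rfl, RingHom.map_det]
    congr 1
    rw [RingHom.mapMatrix_apply]
    show (fromBlocks _ _ _ _).map (eval t) = _
    rw [map_fromBlocks, map_aX, map_CM, map_CM]
    congr 1
    ext i j; simp
  have hF₀ne : F₀ ≠ 0 := by
    intro hcon
    have := hevF₀ 0
    rw [hcon] at this
    simp at this
  have hgood : ∀ t : ℝ, (1 + t • a).det ≠ 0 →
      eval t (F - (C δ₀ * F₀ * X + F₁ * X ^ 2)) = 0 := by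
    intro t hdet
    have : Invertible (1 + t • a) :=
      Matrix.invertibleOfIsUnitDet _ (isUnit_iff_ne_zero.2 hdet)
    have hsm : (t • v) * ⅟(1 + t • a) * (t • u)
        = (t * t) • (v * ⅟(1 + t • a) * u) := by
      rw [Matrix.smul_mul, Matrix.smul_mul, Matrix.mul_smul, smul_smul]
    have e1 : (Matrix.fromBlocks (1 + t • a) (t • u) (t • v) (t • δ)).det
        = (1 + t • a).det * (t * δ₀ - t * t * ((v * ⅟(1 + t • a) * u) () ())) := by
      rw [Matrix.det_fromBlocks₁₁, hsm]
      congr 1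
      rw [Matrix.det_unique]
      simp [Matrix.sub_apply, hδ₀]
    have e2 : (Matrix.fromBlocks (1 + t • a) u v 0).det
        = (1 + t • a).det * (-((v * ⅟(1 + t • a) * u) () ())) := by
      rw [Matrix.det_fromBlocks₁₁]
      congr 1
      rw [Matrix.det_unique]
      simp [Matrix.sub_apply]
    simp only [eval_sub, eval_add, eval_mul, eval_pow, eval_X, eval_C]
    rw [hevF, hevF₀, hevF₁, e1, e2]
    ring
  have hGzero : F - (C δ₀ * F₀ * X + F₁ * X ^ 2) = 0 := by
    apply Polynomial.eq_zero_of_infinite_isRoot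
    have hsub : {x : ℝ | F₀.IsRoot x}ᶜ ⊆ {x : ℝ | (F - (C δ₀ * F₀ * X + F₁ * X ^ 2)).IsRoot x} := by
      intro t ht
      simp only [Set.mem_compl_iff, Set.mem_setOf_eq] at ht ⊢
      have hdet : (1 + t • a).det ≠ 0 := by
        intro hcon; apply ht; show eval t F₀ = 0; rw [hevF₀]; exact hcon
      exact hgood t hdet
    exact ((Polynomial.finite_setOf_isRoot hF₀ne).infinite_compl).mono hsub
  have hFzero : F = 0 := by
    apply Polynomial.eq_zero_of_infinite_isRoot
    have : {x : ℝ | F.IsRoot x} = Set.univ := by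
      ext t; simp only [Set.mem_setOf_eq, Set.mem_univ, iff_true]
      show eval t F = 0
      rw [hevF]; exact h t
    rw [this]
    exact Set.infinite_univ
  have hsum : C δ₀ * F₀ * X + F₁ * X ^ 2 = 0 := by
    have h5 := hGzero
    rw [hFzero] at h5
    linear_combination -h5
  have hfactor : (C δ₀ * F₀ + F₁ * X) * X = 0 := by linear_combination hsum
  have hH : C δ₀ * F₀ + F₁ * X = 0 := by
    rcases mul_eq_zero.1 hfactor with h' | h'
    · exact h'
    · exact absurd h' Polynomial.X_ne_zero
  have hδzero : δ₀ = 0 := by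
    have h6 := congrArg (eval 0) hH
    simp only [eval_add, eval_mul, eval_X, eval_C, mul_zero, add_zero, eval_zero] at h6
    rw [hevF₀ 0] at h6
    simpa using h6
  have hF₁zero : F₁ = 0 := by
    rw [hδzero] at hH
    simp only [map_zero, zero_mul, zero_add] at hH
    rcases mul_eq_zero.1 hH with h' | h'
    · exact h'
    · exact absurd h' Polynomial.X_ne_zero
  have hvu : (v * u) () () = 0 := by
    have h7 := congrArg (eval 0) hF₁zero
    rw [hevF₁ 0, eval_zero] at h7
    simp only [zero_smul, add_zero] at h7
    rw [Matrix.det_fromBlocks_one₁₁, Matrix.det_unique] at h7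
    simpa using h7
  constructor
  · ext i j
    rw [Subsingleton.elim i (), Subsingleton.elim j ()]
    exact hδzero
  · ext i j
    rw [Subsingleton.elim i (), Subsingleton.elim j ()]
    simpa using hvu

end SEC3

section SEC4
variable {r m₂ k₂ : ℕ}

private lemma toBlocks₂₁_add (M N : Matrix (Fin r ⊕ Fin m₂) (Fin r ⊕ Fin k₂) ℝ) :
    (M + N).toBlocks₂₁ = M.toBlocks₂₁ + N.toBlocks₂₁ := by
  ext i j; simp [Matrix.toBlocks₂₁]

private lemma toBlocks₁₂_add (M N : Matrix (Fin r ⊕ Fin m₂) (Fin r ⊕ Fin k₂) ℝ) :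
    (M + N).toBlocks₁₂ = M.toBlocks₁₂ + N.toBlocks₁₂ := by
  ext i j; simp [Matrix.toBlocks₁₂]

/-- Step 1: block relations forced by constant rank along a line. -/
lemma blocks_of_rank (w : Matrix (Fin r ⊕ Fin m₂) (Fin r ⊕ Fin k₂) ℝ)
    (h : ∀ t : ℝ, (Matrix.fromBlocks 1 0 0 0 + t • w).rank = r) :
    w.toBlocks₂₂ = 0 ∧ w.toBlocks₂₁ * w.toBlocks₁₂ = 0 := by
  classical
  set a := w.toBlocks₁₁
  set b := w.toBlocks₁₂
  set c := w.toBlocks₂₁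
  set d := w.toBlocks₂₂
  have key : ∀ (i : Fin m₂) (j : Fin k₂),
      (Matrix.of fun (_ : Unit) (_ : Unit) => d i j) = (0 : Matrix Unit Unit ℝ) ∧
      (Matrix.of fun (_ : Unit) (j' : Fin r) => c i j' : Matrix Unit (Fin r) ℝ) *
        (Matrix.of fun (i' : Fin r) (_ : Unit) => b i' j : Matrix (Fin r) Unit ℝ)
        = (0 : Matrix Unit Unit ℝ) := by
    intro i j
    refine minor_poly a _ _ _ ?_
    intro t
    set N := (Matrix.fromBlocks 1 0 0 0 + t • w).submatrix
        (Sum.map id (fun _ : Unit => i)) (Sum.map id (fun _ : Unit => j)) with hN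
    have hNeq : N = Matrix.fromBlocks (1 + t • a)
        (t • (Matrix.of fun (i' : Fin r) (_ : Unit) => b i' j : Matrix (Fin r) Unit ℝ))
        (t • (Matrix.of fun (_ : Unit) (j' : Fin r) => c i j' : Matrix Unit (Fin r) ℝ))
        (t • (Matrix.of fun (_ : Unit) (_ : Unit) => d i j : Matrix Unit Unit ℝ)) := by
      ext k l
      rcases k with k | k <;> rcases l with l | l <;>
        simp [hN, Matrix.submatrix_apply, Matrix.add_apply, Matrix.smul_apply,
          Matrix.fromBlocks, Matrix.toBlocks₁₁, Matrix.toBlocks₁₂, Matrix.toBlocks₂₁,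
          Matrix.toBlocks₂₂, a, b, c, d]
    have hrank : N.rank ≤ r := by
      rw [hN]
      calc ((Matrix.fromBlocks 1 0 0 0 + t • w).submatrix _ _).rank
          ≤ (Matrix.fromBlocks 1 0 0 0 + t • w).rank := rank_submatrix_le' _ _ _
        _ = r := h t
    rw [← hNeq]
    by_contra hdet'
    have : N.rank = Fintype.card (Fin r ⊕ Unit) :=
      Matrix.rank_of_isUnit N ((Matrix.isUnit_iff_isUnit_det N).2 (isUnit_iff_ne_zero.2 hdet'))
    rw [Fintype.card_sum, Fintype.card_fin, Fintype.card_unit] at this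
    omega
  constructor
  · ext i j
    have := (key i j).1
    exact congrFun (congrFun this ()) ()
  · ext i j
    have h2 := (key i j).2
    have h3 := congrFun (congrFun h2 ()) ()
    simpa [Matrix.mul_apply] using h3

private def symOf {r : ℕ} (y : {q : Fin r × Fin r // q.1 ≤ q.2} → ℝ) :
    Matrix (Fin r) (Fin r) ℝ :=
  Matrix.of fun i j => if h : i ≤ j then y ⟨(i, j), h⟩ else y ⟨(j, i), (not_le.1 h).le⟩

private lemma symOf_herm {r : ℕ} (y : {q : Fin r × Fin r // q.1 ≤ q.2} → ℝ) :
    (symOf y).IsHermitian := by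
  unfold Matrix.IsHermitian
  ext i j
  rw [Matrix.conjTranspose_apply, star_trivial]
  show symOf y j i = symOf y i j
  unfold symOf
  simp only [Matrix.of_apply]
  by_cases hij : i ≤ j <;> by_cases hji : j ≤ i
  · cases le_antisymm hij hji
    simp
  · rw [dif_neg hji, dif_pos hij]
  · rw [dif_pos hji, dif_neg hij]
  · exact absurd (le_of_not_ge hij) hji

private lemma symOf_add {r : ℕ} (y z : {q : Fin r × Fin r // q.1 ≤ q.2} → ℝ) :
    symOf (y + z) = symOf y + symOf z := by
  ext i j
  simp only [symOf, Matrix.of_apply, Matrix.add_apply, Pi.add_apply]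
  split_ifs <;> rfl

private lemma symOf_zero {r : ℕ} : symOf (0 : {q : Fin r × Fin r // q.1 ≤ q.2} → ℝ) = 0 := by
  ext i j
  simp only [symOf, Matrix.of_apply, Pi.zero_apply, Matrix.zero_apply]
  split_ifs <;> rfl

private lemma symOf_smul {r : ℕ} (t : ℝ) (y : {q : Fin r × Fin r // q.1 ≤ q.2} → ℝ) :
    symOf (t • y) = t • symOf y := by
  ext i j
  simp only [symOf, Matrix.of_apply, Matrix.smul_apply, Pi.smul_apply]
  split_ifs <;> rfl

/-- The core dimension bound. -/
theorem core_bound (hr : 0 < r) (hk : k₂ ≤ m₂)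
    (W : Submodule ℝ (Matrix (Fin r ⊕ Fin m₂) (Fin r ⊕ Fin k₂) ℝ))
    (hW : ∀ w ∈ W, (Matrix.fromBlocks 1 0 0 0 + w).rank = r) :
    finrank ℝ W ≤ r * (r - 1) / 2 + r * m₂ := by
  classical
  let cL : Matrix (Fin r ⊕ Fin m₂) (Fin r ⊕ Fin k₂) ℝ →ₗ[ℝ] Matrix (Fin m₂) (Fin r) ℝ :=
    { toFun := Matrix.toBlocks₂₁
      map_add' := fun M N => by ext i j; simp [Matrix.toBlocks₂₁]
      map_smul' := fun t M => by ext i j; simp [Matrix.toBlocks₂₁] }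
  have hd : ∀ w ∈ W, w.toBlocks₂₂ = 0 :=
    fun w hw => (blocks_of_rank w (fun t => hW _ (W.smul_mem t hw))).1
  have hcb : ∀ w ∈ W, w.toBlocks₂₁ * w.toBlocks₁₂ = 0 :=
    fun w hw => (blocks_of_rank w (fun t => hW _ (W.smul_mem t hw))).2
  have hpol : ∀ w ∈ W, ∀ w' ∈ W,
      w.toBlocks₂₁ * w'.toBlocks₁₂ + w'.toBlocks₂₁ * w.toBlocks₁₂ = 0 := by
    intro w hw w' hw'
    have h1 := hcb (w + w') (W.add_mem hw hw')
    rw [toBlocks₂₁_add, toBlocks₁₂_add, Matrix.add_mul, Matrix.mul_add, Matrix.mul_add,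
      hcb w hw, hcb w' hw'] at h1
    calc w.toBlocks₂₁ * w'.toBlocks₁₂ + w'.toBlocks₂₁ * w.toBlocks₁₂
        = 0 + w.toBlocks₂₁ * w'.toBlocks₁₂ + (w'.toBlocks₂₁ * w.toBlocks₁₂ + 0) := by abel
      _ = 0 := h1
  set V : Submodule ℝ (Fin r → ℝ) :=
    ⨅ (w : W),
      LinearMap.ker ((Matrix.toBlocks₂₁
        (w : Matrix (Fin r ⊕ Fin m₂) (Fin r ⊕ Fin k₂) ℝ)).mulVecLin) with hV
  set v : ℕ := finrank ℝ V with hv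
  have hvr : v ≤ r := by
    have h2 := Submodule.finrank_le V
    rwa [Module.finrank_pi, Fintype.card_fin] at h2
  set cW : W →ₗ[ℝ] Matrix (Fin m₂) (Fin r) ℝ := cL.comp W.subtype with hcW
  have hrn := LinearMap.finrank_range_add_finrank_ker cW
  obtain ⟨V', hV'⟩ := Submodule.exists_isCompl V
  have hV'dim : finrank ℝ V' = r - v := by
    have h2 := Submodule.finrank_add_eq_of_isCompl hV'
    rw [Module.finrank_pi, Fintype.card_fin] at h2
    omega
  let Θ : Matrix (Fin m₂) (Fin r) ℝ →ₗ[ℝ] (V' →ₗ[ℝ] (Fin m₂ → ℝ)) :=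
    { toFun := fun γ => γ.mulVecLin.comp V'.subtype
      map_add' := fun γ γ' => by
        ext x
        simp [Matrix.add_mulVec]
      map_smul' := fun t γ => by
        ext x
        simp [Matrix.smul_mulVec] }
  have hrange : finrank ℝ (LinearMap.range cW) ≤ m₂ * (r - v) := by
    have hinj : Function.Injective (Θ.comp (LinearMap.range cW).subtype) := by
      rw [← LinearMap.ker_eq_bot, LinearMap.ker_eq_bot']
      rintro ⟨γ, hγ⟩ hγ0
      obtain ⟨⟨w, hw⟩, hγw⟩ := hγ
      have hVker : ∀ y ∈ V, γ.mulVec y = 0 := by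
        intro y hy
        have h3 : y ∈ LinearMap.ker ((Matrix.toBlocks₂₁ w).mulVecLin) := by
          rw [hV] at hy
          exact Submodule.mem_iInf _ |>.1 hy ⟨w, hw⟩
        have h4 : (Matrix.toBlocks₂₁ w).mulVec y = 0 := h3
        have h5 : γ = Matrix.toBlocks₂₁ w := by rw [← hγw]; rfl
        rw [h5]
        exact h4
      have hV'ker : ∀ y : V', γ.mulVec (y : Fin r → ℝ) = 0 := by
        intro y
        have h6 : (Θ γ) y = 0 := by
          have : Θ.comp (LinearMap.range cW).subtype ⟨γ, ⟨⟨w, hw⟩, hγw⟩⟩ = Θ γ := rfl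
          rw [this] at hγ0
          rw [hγ0]
          rfl
        exact h6
      have hall : ∀ y : Fin r → ℝ, γ.mulVec y = 0 := by
        intro y
        have hy : y ∈ V ⊔ V' := by
          rw [hV'.sup_eq_top]; trivial
        obtain ⟨y₁, hy₁, y₂, hy₂, rfl⟩ := Submodule.mem_sup.1 hy
        rw [Matrix.mulVec_add, hVker y₁ hy₁, hV'ker ⟨y₂, hy₂⟩]
        simp
      have hγ0' : γ = 0 := by
        ext i j
        have h7 := congrFun (hall (Pi.single j 1)) i
        rw [Matrix.mulVec_single] at h7
        simpa using h7
      exact Subtype.ext hγ0'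
    have h8 := LinearMap.finrank_le_finrank_of_injective hinj
    rw [Module.finrank_linearMap, Module.finrank_pi, Fintype.card_fin, hV'dim] at h8
    rw [Nat.mul_comm]
    exact h8
  -- the enveloping space T of the kernel part, and the symmetric complement X
  let Ξ : (Matrix (Fin r) (Fin r) ℝ × (Fin k₂ → V)) →ₗ[ℝ]
      Matrix (Fin r ⊕ Fin m₂) (Fin r ⊕ Fin k₂) ℝ :=
    { toFun := fun p =>
        Matrix.fromBlocks p.1 (Matrix.of fun i j => ((p.2 j : Fin r → ℝ) i)) 0 0
      map_add' := fun p q => by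
        ext i j
        rcases i with i | i <;> rcases j with j | j <;>
          simp [Matrix.fromBlocks]
      map_smul' := fun t p => by
        ext i j
        rcases i with i | i <;> rcases j with j | j <;>
          simp [Matrix.fromBlocks] }
  set T : Submodule ℝ (Matrix (Fin r ⊕ Fin m₂) (Fin r ⊕ Fin k₂) ℝ) := LinearMap.range Ξ with hT
  have hTdim : finrank ℝ T ≤ r * r + k₂ * v := by
    have h9 : finrank ℝ T ≤ finrank ℝ (Matrix (Fin r) (Fin r) ℝ × (Fin k₂ → V)) :=
      LinearMap.finrank_range_le Ξ
    rw [Module.finrank_prod, Module.finrank_matrix, Module.finrank_pi_fintype] at h9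
    simp only [Finset.sum_const, Finset.card_univ, Fintype.card_fin, smul_eq_mul,
      Module.finrank_self, mul_one, ← hv] at h9
    exact h9
  set Wk : Submodule ℝ (Matrix (Fin r ⊕ Fin m₂) (Fin r ⊕ Fin k₂) ℝ) :=
    W ⊓ LinearMap.ker cL with hWk
  have hWkT : Wk ≤ T := by
    rintro w ⟨hwW, hwc⟩
    have hc0 : w.toBlocks₂₁ = 0 := hwc
    have hcols : ∀ j, (fun i => w.toBlocks₁₂ i j) ∈ V := by
      intro j
      rw [hV]
      apply Submodule.mem_iInf _ |>.2
      rintro ⟨w', hw'⟩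
      have h10 := hpol w hwW w' hw'
      rw [hc0, Matrix.zero_mul, zero_add] at h10
      show (Matrix.toBlocks₂₁ w').mulVec (fun i => w.toBlocks₁₂ i j) = 0
      funext i
      have h11 := congrFun (congrFun h10 i) j
      simpa [Matrix.mul_apply, Matrix.mulVec, dotProduct] using h11
    refine ⟨(w.toBlocks₁₁, fun j => ⟨fun i => w.toBlocks₁₂ i j, hcols j⟩), ?_⟩
    show Matrix.fromBlocks w.toBlocks₁₁ (Matrix.of fun i j => w.toBlocks₁₂ i j) 0 0 = w
    have h12 : (Matrix.of fun i j => w.toBlocks₁₂ i j) = w.toBlocks₁₂ := rfl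
    rw [h12, ← hd w hwW, ← hc0]
    exact Matrix.fromBlocks_toBlocks w
  let φsym : ({q : Fin r × Fin r // q.1 ≤ q.2} → ℝ) →ₗ[ℝ]
      Matrix (Fin r ⊕ Fin m₂) (Fin r ⊕ Fin k₂) ℝ :=
    { toFun := fun y => Matrix.fromBlocks (symOf y) 0 0 0
      map_add' := fun y z => by
        show Matrix.fromBlocks (symOf (y + z)) 0 0 0
          = Matrix.fromBlocks (symOf y) 0 0 0 + Matrix.fromBlocks (symOf z) 0 0 0
        rw [symOf_add, Matrix.fromBlocks_add]
        simp
      map_smul' := fun t y => by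
        show Matrix.fromBlocks (symOf (t • y)) 0 0 0 = t • Matrix.fromBlocks (symOf y) 0 0 0
        rw [symOf_smul, Matrix.fromBlocks_smul]
        simp }
  set X : Submodule ℝ (Matrix (Fin r ⊕ Fin m₂) (Fin r ⊕ Fin k₂) ℝ) :=
    LinearMap.range φsym with hX
  have hφinj : Function.Injective φsym := by
    rw [← LinearMap.ker_eq_bot, LinearMap.ker_eq_bot']
    intro y hy
    funext q
    obtain ⟨⟨i, j⟩, hij⟩ := q
    have h13 : symOf y = 0 := by
      have := congrArg Matrix.toBlocks₁₁ hy
      exact this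
    have h14 := congrFun (congrFun h13 i) j
    simp only [symOf, Matrix.of_apply, dif_pos hij] at h14
    exact h14
  have hXdim : finrank ℝ X = r * (r - 1) / 2 + r := by
    rw [hX, LinearMap.finrank_range_of_inj hφinj, Module.finrank_pi, card_le_pairs]
  have hXT : X ≤ T := by
    rintro w ⟨y, rfl⟩
    refine ⟨(symOf y, 0), ?_⟩
    show Matrix.fromBlocks (symOf y) (Matrix.of fun i j => (((0 : Fin k₂ → V) j : Fin r → ℝ)) i) 0 0
      = Matrix.fromBlocks (symOf y) 0 0 0
    ext i j
    rcases i with i | i <;> rcases j with j | j <;> simp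
  have hdisj : Wk ⊓ X = ⊥ := by
    rw [Submodule.eq_bot_iff]
    rintro w ⟨hwk, y, rfl⟩
    have hwW : φsym y ∈ W := hwk.1
    have hunit : ∀ t : ℝ, IsUnit (1 + t • symOf y) := by
      intro t
      have h15 := hW _ (W.smul_mem t hwW)
      have h16 : Matrix.fromBlocks 1 0 0 0 + t • φsym y
          = Matrix.fromBlocks (1 + t • symOf y) 0 0 0 := by
        show Matrix.fromBlocks 1 0 0 0 + t • Matrix.fromBlocks (symOf y) 0 0 0 = _
        rw [Matrix.fromBlocks_smul, Matrix.fromBlocks_add]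
        simp
      rw [h16, rank_fromBlocks_corner] at h15
      apply isUnit_of_rank_eq_card
      rw [h15, Fintype.card_fin]
    have h17 : symOf y = 0 := symm_eq_zero_of_unit (symOf_herm y) hunit
    show Matrix.fromBlocks (symOf y) 0 0 0 = 0
    rw [h17]
    ext i j
    rcases i with i | i <;> rcases j with j | j <;> simp
  have hsup : finrank ℝ Wk + (r * (r - 1) / 2 + r) ≤ r * r + k₂ * v := by
    have h19 := Submodule.finrank_sup_add_finrank_inf_eq Wk X
    rw [hdisj, finrank_bot, add_zero, hXdim] at h19
    calc finrank ℝ Wk + (r * (r - 1) / 2 + r) = finrank ℝ ↥(Wk ⊔ X) := h19.symm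
      _ ≤ finrank ℝ T := Submodule.finrank_mono (sup_le hWkT hXT)
      _ ≤ r * r + k₂ * v := hTdim
  -- kernel identification
  have hkerWk : finrank ℝ (LinearMap.ker cW) = finrank ℝ Wk := by
    have h20 : LinearMap.ker cW = Submodule.comap W.subtype Wk := by
      ext ⟨w, hw⟩
      simp only [LinearMap.mem_ker, Submodule.mem_comap, Submodule.coe_subtype, hWk,
        Submodule.mem_inf]
      constructor
      · intro h21
        exact ⟨hw, h21⟩
      · intro h21
        exact h21.2
    rw [h20]
    exact LinearEquiv.finrank_eq (Submodule.comapSubtypeEquivOfLe inf_le_left)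
  -- final arithmetic
  have hWdim : finrank ℝ W = finrank ℝ (LinearMap.range cW) + finrank ℝ (LinearMap.ker cW) := by
    rw [hrn]
  have harith : m₂ * (r - v) + k₂ * v ≤ r * m₂ := by
    have h22 : k₂ * v ≤ m₂ * v := Nat.mul_le_mul_right v hk
    have h23 : m₂ * (r - v) + m₂ * v = m₂ * r := by
      rw [← Nat.mul_add, Nat.sub_add_cancel hvr]
    calc m₂ * (r - v) + k₂ * v ≤ m₂ * (r - v) + m₂ * v := by omega
      _ = m₂ * r := h23
      _ = r * m₂ := Nat.mul_comm _ _
  have hsq := nat_square_split (r := r) hr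
  omega





end SEC4
theorem upper_bound (n p r : ℕ) (hrp : r ≤ p) (hpn : p ≤ n) (hr : 0 < r)
    (W : Submodule ℝ (Matrix (Fin n) (Fin p) ℝ)) (A : Matrix (Fin n) (Fin p) ℝ)
    (hA : A.rank = r) (hAW : ∀ w ∈ W, (A + w).rank = r) :
    finrank ℝ W ≤ r * (r - 1) / 2 + r * (n - r) := by
  classical
  set f := A.mulVecLin with hf
  have hrangeA : finrank ℝ (LinearMap.range f) = r := hA
  obtain ⟨E₁, hE⟩ := Submodule.exists_isCompl (LinearMap.ker f)
  have hrn := LinearMap.finrank_range_add_finrank_ker f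
  rw [Module.finrank_pi, Fintype.card_fin] at hrn
  have hcompl := Submodule.finrank_add_eq_of_isCompl hE
  rw [Module.finrank_pi, Fintype.card_fin] at hcompl
  have hKdim : finrank ℝ (LinearMap.ker f) = p - r := by omega
  have hE1dim : finrank ℝ E₁ = r := by omega
  let bE : Basis (Fin r) ℝ E₁ := Module.finBasisOfFinrankEq ℝ E₁ hE1dim
  let bK : Basis (Fin (p - r)) ℝ (LinearMap.ker f) :=
    Module.finBasisOfFinrankEq ℝ (LinearMap.ker f) hKdim
  let bP : Basis (Fin r ⊕ Fin (p - r)) ℝ (Fin p → ℝ) :=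
    (bE.prod bK).map (Submodule.prodEquivOfIsCompl E₁ (LinearMap.ker f) hE.symm)
  have hbPl : ∀ i, bP (Sum.inl i) = (bE i : Fin p → ℝ) := by
    intro i
    simp [bP, Submodule.coe_prodEquivOfIsCompl]
  have hbPr : ∀ j, bP (Sum.inr j) = (bK j : Fin p → ℝ) := by
    intro j
    simp [bP, Submodule.coe_prodEquivOfIsCompl]
  -- image vectors
  set w : Fin r → (Fin n → ℝ) := fun i => f (bE i : Fin p → ℝ) with hw
  have li0 : LinearIndependent ℝ (fun i => (bE i : Fin p → ℝ)) :=
    bE.linearIndependent.map' E₁.subtype (Submodule.ker_subtype E₁)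
  have hspanle : Submodule.span ℝ (Set.range fun i => (bE i : Fin p → ℝ)) ≤ E₁ := by
    rw [Submodule.span_le]
    rintro x ⟨i, rfl⟩
    exact (bE i).2
  have li : LinearIndependent ℝ w := by
    have hdis : Disjoint (Submodule.span ℝ (Set.range fun i => (bE i : Fin p → ℝ)))
        (LinearMap.ker f) := Disjoint.mono_left hspanle hE.disjoint.symm
    exact li0.map hdis
  have hE₁span : Submodule.map f E₁ = Submodule.span ℝ (Set.range w) := by
    have h1 : E₁ = Submodule.span ℝ (Set.range fun i => (bE i : Fin p → ℝ)) := by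
      apply le_antisymm _ hspanle
      intro x hx
      have h2 := bE.span_eq
      have h3 : (⟨x, hx⟩ : E₁) ∈ Submodule.span ℝ (Set.range bE) := by rw [h2]; trivial
      have h4 := Submodule.map_mono (le_of_eq h2.symm) (Submodule.mem_map_of_mem
        (f := E₁.subtype) (Submodule.mem_top (x := (⟨x, hx⟩ : E₁))))
      rw [Submodule.map_span] at h4
      have h5 : E₁.subtype '' Set.range bE = Set.range fun i => (bE i : Fin p → ℝ) := by
        ext y; simp
      rw [h5] at h4
      exact h4
    rw [h1, Submodule.map_span]
    congr 1
    ext y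
    simp [hw]
  have hspan : Submodule.span ℝ (Set.range w) = LinearMap.range f := by
    rw [← hE₁span]
    apply le_antisymm
    · rintro x ⟨y, _, rfl⟩
      exact LinearMap.mem_range_self f y
    · rw [LinearMap.range_eq_map, ← hE.sup_eq_top, Submodule.map_sup]
      apply sup_le
      · rintro x ⟨y, hy, rfl⟩
        have : f y = 0 := hy
        rw [this]
        exact Submodule.zero_mem _
      · exact le_refl _
  let bR : Basis (Fin r) ℝ (LinearMap.range f) :=
    (Basis.span li).map (LinearEquiv.ofEq _ _ hspan)
  obtain ⟨F₂, hF⟩ := Submodule.exists_isCompl (LinearMap.range f)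
  have hcomplF := Submodule.finrank_add_eq_of_isCompl hF
  rw [Module.finrank_pi, Fintype.card_fin] at hcomplF
  have hF2dim : finrank ℝ F₂ = n - r := by omega
  let bF₂ : Basis (Fin (n - r)) ℝ F₂ := Module.finBasisOfFinrankEq ℝ F₂ hF2dim
  let bN : Basis (Fin r ⊕ Fin (n - r)) ℝ (Fin n → ℝ) :=
    (bR.prod bF₂).map (Submodule.prodEquivOfIsCompl (LinearMap.range f) F₂ hF)
  have hbNl : ∀ i, bN (Sum.inl i) = w i := by
    intro i
    simp [bN, Submodule.coe_prodEquivOfIsCompl, bR, Basis.span_apply]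
  -- the equivalence
  let Φ : Matrix (Fin n) (Fin p) ℝ ≃ₗ[ℝ] Matrix (Fin r ⊕ Fin (n - r)) (Fin r ⊕ Fin (p - r)) ℝ :=
    (Matrix.toLin (Pi.basisFun ℝ (Fin p)) (Pi.basisFun ℝ (Fin n))).trans
      (LinearMap.toMatrix bP bN)
  have hrkΦ : ∀ X : Matrix (Fin n) (Fin p) ℝ, (Φ X).rank = X.rank := by
    intro X
    rw [Matrix.rank_eq_finrank_range_toLin (Φ X) bN bP,
      Matrix.rank_eq_finrank_range_toLin X (Pi.basisFun ℝ (Fin n)) (Pi.basisFun ℝ (Fin p))]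
    have h0 : Matrix.toLin bP bN (Φ X)
        = Matrix.toLin (Pi.basisFun ℝ (Fin p)) (Pi.basisFun ℝ (Fin n)) X :=
      Matrix.toLin_toMatrix _ _ _
    rw [h0]
  have hΦA : Φ A = Matrix.fromBlocks 1 0 0 0 := by
    have htl : ∀ y, Matrix.toLin (Pi.basisFun ℝ (Fin p)) (Pi.basisFun ℝ (Fin n)) A y
        = f y := by
      intro y
      rw [Matrix.toLin_eq_toLin', Matrix.toLin'_apply]
      rfl
    ext k l
    show LinearMap.toMatrix bP bN (Matrix.toLin (Pi.basisFun ℝ (Fin p))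
      (Pi.basisFun ℝ (Fin n)) A) k l = _
    rw [LinearMap.toMatrix_apply, htl]
    rcases l with i | j
    · rw [hbPl]
      rw [show f ((bE i : Fin p → ℝ)) = w i from rfl, ← hbNl i, Basis.repr_self]
      rcases k with k | k
      · rw [Finsupp.single_apply]
        show _ = (1 : Matrix (Fin r) (Fin r) ℝ) k i
        rw [Matrix.one_apply]
        simp [eq_comm]
      · rw [Finsupp.single_apply]
        simp
    · rw [hbPr]
      have hker : f ((bK j : Fin p → ℝ)) = 0 := (bK j).2
      rw [hker]
      rcases k with k | k <;> simp
  -- transport and conclude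
  have hk2 : p - r ≤ n - r := Nat.sub_le_sub_right hpn r
  have hres := core_bound hr hk2 (W.map Φ.toLinearMap) ?_
  · rwa [LinearEquiv.finrank_map_eq] at hres
  · rintro w' ⟨w₀, hw₀, rfl⟩
    show (Matrix.fromBlocks 1 0 0 0 + Φ w₀).rank = r
    rw [← hΦA, ← map_add, hrkΦ]
    exact hAW w₀ hw₀





private def sltOf {r : ℕ} (y : {q : Fin r × Fin r // q.1 < q.2} → ℝ) :
    Matrix (Fin r) (Fin r) ℝ :=
  Matrix.of fun i j => if h : i < j then y ⟨(i, j), h⟩ else 0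

private lemma sltOf_unit {r : ℕ} (y : {q : Fin r × Fin r // q.1 < q.2} → ℝ) (t : ℝ) :
    IsUnit (1 + t • sltOf y) := by
  rw [Matrix.isUnit_iff_isUnit_det]
  have htri : (1 + t • sltOf y).BlockTriangular id := by
    intro i j hij
    have hij' : (j : Fin r) < i := hij
    simp only [Matrix.add_apply, Matrix.smul_apply, sltOf, Matrix.of_apply]
    rw [Matrix.one_apply_ne (ne_of_gt hij'), dif_neg (not_lt.2 hij'.le)]
    simp
  rw [Matrix.det_of_upperTriangular htri]
  have hdiag : ∀ i : Fin r, (1 + t • sltOf y) i i = 1 := by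
    intro i
    simp only [Matrix.add_apply, Matrix.smul_apply, sltOf, Matrix.of_apply]
    rw [Matrix.one_apply_eq, dif_neg (lt_irrefl i)]
    simp
  simp only [hdiag]
  simp

theorem construction (n p r : ℕ) (hrp : r ≤ p) (hpn : p ≤ n) (hr : 0 < r) :
    ∃ S : AffineSubspace ℝ (Matrix (Fin n) (Fin p) ℝ),
      (S : Set (Matrix (Fin n) (Fin p) ℝ)).Nonempty ∧
      (∀ M ∈ S, M.rank = r) ∧
      Module.finrank ℝ S.direction = r * (r - 1) / 2 + r * (n - r) := by
  classical
  have hrn : r ≤ n := le_trans hrp hpn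
  let eR : Fin r ⊕ Fin (n - r) ≃ Fin n :=
    finSumFinEquiv.trans (finCongr (Nat.add_sub_cancel' hrn))
  let eC : Fin r ⊕ Fin (p - r) ≃ Fin p :=
    finSumFinEquiv.trans (finCongr (Nat.add_sub_cancel' hrp))
  let Ψ : Matrix (Fin r ⊕ Fin (n - r)) (Fin r ⊕ Fin (p - r)) ℝ ≃ₗ[ℝ]
      Matrix (Fin n) (Fin p) ℝ := Matrix.reindexLinearEquiv ℝ ℝ eR eC
  let φlt : (({q : Fin r × Fin r // q.1 < q.2} → ℝ) × Matrix (Fin (n - r)) (Fin r) ℝ) →ₗ[ℝ]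
      Matrix (Fin r ⊕ Fin (n - r)) (Fin r ⊕ Fin (p - r)) ℝ :=
    { toFun := fun z => Matrix.fromBlocks (sltOf z.1) 0 z.2 0
      map_add' := fun z z' => by
        ext i j
        rcases i with i | i <;> rcases j with j | j <;>
          simp only [Matrix.fromBlocks_apply₁₁, Matrix.fromBlocks_apply₁₂,
            Matrix.fromBlocks_apply₂₁, Matrix.fromBlocks_apply₂₂, Matrix.add_apply,
            Prod.fst_add, Prod.snd_add, Pi.add_apply, Matrix.zero_apply, add_zero, sltOf,
            Matrix.of_apply]
        · split_ifs <;> simp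
      map_smul' := fun t z => by
        ext i j
        rcases i with i | i <;> rcases j with j | j <;>
          simp only [Matrix.fromBlocks_apply₁₁, Matrix.fromBlocks_apply₁₂,
            Matrix.fromBlocks_apply₂₁, Matrix.fromBlocks_apply₂₂, Matrix.smul_apply,
            Prod.smul_fst, Prod.smul_snd, Pi.smul_apply, Matrix.zero_apply, smul_zero,
            RingHom.id_apply, sltOf, Matrix.of_apply]
        · split_ifs <;> simp }
  have hφinj : Function.Injective φlt := by
    rw [← LinearMap.ker_eq_bot, LinearMap.ker_eq_bot']
    intro z hz
    have h1 : sltOf z.1 = 0 := by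
      have := congrArg Matrix.toBlocks₁₁ hz
      exact this
    have h2 : z.2 = 0 := by
      have := congrArg Matrix.toBlocks₂₁ hz
      exact this
    have h3 : z.1 = 0 := by
      funext q
      obtain ⟨⟨i, j⟩, hij⟩ := q
      have h4 := congrFun (congrFun h1 i) j
      simp only [sltOf, Matrix.of_apply, dif_pos hij, Matrix.zero_apply] at h4
      exact h4
    rw [Prod.ext_iff]
    exact ⟨h3, h2⟩
  set W₀ : Submodule ℝ (Matrix (Fin n) (Fin p) ℝ) :=
    (LinearMap.range φlt).map Ψ.toLinearMap with hW₀
  set B₀ : Matrix (Fin r ⊕ Fin (n - r)) (Fin r ⊕ Fin (p - r)) ℝ :=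
    Matrix.fromBlocks 1 0 0 0 with hB₀
  refine ⟨AffineSubspace.mk' (Ψ B₀) W₀, ⟨Ψ B₀, AffineSubspace.self_mem_mk' _ _⟩, ?_, ?_⟩
  · intro M hM
    rw [AffineSubspace.mem_mk'] at hM
    obtain ⟨w', ⟨z, rfl⟩, hw⟩ := hM
    simp only [LinearEquiv.coe_coe] at hw
    have hvs : M -ᵥ Ψ B₀ = M - Ψ B₀ := rfl
    rw [hvs] at hw
    have hM' : M = Ψ (B₀ + φlt z) := by
      rw [map_add, hw]
      abel
    rw [hM']
    show (Matrix.reindex eR eC (B₀ + φlt z)).rank = r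
    rw [rank_reindex']
    have hblocks : B₀ + φlt z
        = Matrix.fromBlocks (1 + sltOf z.1) 0 z.2 0 := by
      show Matrix.fromBlocks 1 0 0 0 + Matrix.fromBlocks (sltOf z.1) 0 z.2 0 = _
      rw [Matrix.fromBlocks_add]
      simp
    rw [hblocks, rank_fromBlocks_isUnit _ (by simpa using sltOf_unit z.1 1)]
    exact Fintype.card_fin r
  · rw [AffineSubspace.direction_mk', hW₀, LinearEquiv.finrank_map_eq,
      LinearMap.finrank_range_of_inj hφinj, Module.finrank_prod, Module.finrank_pi,
      Module.finrank_matrix, card_lt_pairs]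
    simp [Module.finrank_self, Nat.mul_comm]


end StmtAux

/-- For integers n ≥ p ≥ r > 0, every affine subspace of n×p real
matrices in which every element has rank exactly r has dimension at most
r(r-1)/2 + r(n-r), and this bound is attained. -/
theorem stmt_0 (n p r : ℕ) (hrp : r ≤ p) (hpn : p ≤ n) (hr : 0 < r) :
    (∀ S : AffineSubspace ℝ (Matrix (Fin n) (Fin p) ℝ),
        (S : Set (Matrix (Fin n) (Fin p) ℝ)).Nonempty →
        (∀ M ∈ S, M.rank = r) →
        Module.finrank ℝ S.direction ≤ r * (r - 1) / 2 + r * (n - r)) ∧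
      ∃ S : AffineSubspace ℝ (Matrix (Fin n) (Fin p) ℝ),
        (S : Set (Matrix (Fin n) (Fin p) ℝ)).Nonempty ∧
        (∀ M ∈ S, M.rank = r) ∧
        Module.finrank ℝ S.direction = r * (r - 1) / 2 + r * (n - r) := by
  constructor
  · intro S hne hrank
    obtain ⟨A, hA⟩ := hne
    have hAr : A.rank = r := hrank A hA
    apply StmtAux.upper_bound n p r hrp hpn hr S.direction A hAr
    intro w hw
    have h1 : w +ᵥ A ∈ S := AffineSubspace.vadd_mem_of_mem_direction hw hA
    have h2 : A + w = w +ᵥ A := by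
      rw [vadd_eq_add, add_comm]
    rw [h2]
    exact hrank _ h1
  · exact StmtAux.construction n p r hrp hpn hr
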